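/- (Christoffel–Darboux formula.) Let q,p ≥ 1, let x,y ∈ ℂ with x ≠ 0, and let T be a semi-infinite complex matrix with T(i,j) = 0 whenever j > i + 2q or i > j + 2p. Let β : ℕ × {0,…,q−1} → ℂ and α : ℕ × {0,…,p−1} → ℂ (the values B_j^{(b)}(y) and A_i^{(a)}(x⁻¹) of the CMV Laurent polynomial families) satisfy, for all i, b and all j, a: ∑_j T(i,j)·β(j,b) = y·β(i,b) and ∑_i α(i,a)·T(i,j) = x⁻¹·α(j,a) (finite sums by bandedness). Define K^{[n]}_{a,b} := ∑_{k<n} α(k,a)·β(k,b). Then for every n ≥ 1 and all a, b: (x⁻¹ − y)·K^{[n]}_{a,b} = ∑_{i≥n, j<n} α(i,a)·T(i,j)·β(j,b) − ∑_{i<n, j≥n} α(i,a)·T(i,j)·β(j,b), where both double sums are finite (only i < n+2p and j < n+2q contribute). -/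

import Mathlib

noncomputable section

/-- CMV exponent sequence 0, -1, 1, -2, 2, … : e(2k)=k, e(2k+1)=-(k+1). -/
def cmvE (n : ℕ) : ℤ := if n % 2 = 0 then ((n / 2 : ℕ) : ℤ) else -(((n / 2 : ℕ) : ℤ) + 1)

/-- The semi-infinite 0–1 matrix Υ_{[r]}. -/
def Ups (r : ℕ) : ℕ → ℕ → ℂ := fun n m =>
  if n % r = m % r ∧ cmvE (m / r) = cmvE (n / r) + 1 then 1 else 0

/-- The intertwining matrix η_{[r]}. -/
def Eta (r : ℕ) : ℕ → ℕ → ℂ := fun n m =>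
  if n % r = m % r ∧ cmvE (m / r) = -cmvE (n / r) then 1 else 0

/-- The untangling matrix ν_{[r]}. -/
def Nu (r : ℕ) : ℕ → ℕ → ℂ := fun n m =>
  if n % r = m % r ∧ cmvE (m / r) = -cmvE (n / r) - 1 then 1 else 0

/-- Entrywise product of semi-infinite matrices (entrywise finite sums in all uses below). -/
def mprod (A B : ℕ → ℕ → ℂ) : ℕ → ℕ → ℂ := fun n m => ∑' k, A n k * B k m

/-- The semi-infinite identity matrix. -/
def mid : ℕ → ℕ → ℂ := fun n m => if n = m then 1 else 0

/-- Transpose of a semi-infinite matrix. -/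
def mtrans (A : ℕ → ℕ → ℂ) : ℕ → ℕ → ℂ := fun n m => A m n

/-- Powers of a semi-infinite matrix. -/
def mpow (A : ℕ → ℕ → ℂ) : ℕ → ℕ → ℕ → ℂ
  | 0 => mid
  | d + 1 => mprod A (mpow A d)

/-- The CMV monomial matrix Z_{[r]}(z). -/
def cmvZ (r : ℕ) (z : ℂ) : ℕ → ℕ → ℂ := fun n a =>
  if n % r = a then z ^ cmvE (n / r) else 0

def LowerTri (L : ℕ → ℕ → ℂ) : Prop := ∀ n m, n < m → L n m = 0

def UpperTri (U : ℕ → ℕ → ℂ) : Prop := ∀ n m, m < n → U n m = 0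

/-- The left CMV moment matrix M_c. -/
def cmvM {q p : ℕ} (hq : 0 < q) (hp : 0 < p)
    (c : ℤ → Matrix (Fin q) (Fin p) ℂ) : ℕ → ℕ → ℂ := fun n m =>
  c (cmvE (n / q) - cmvE (m / p)) ⟨n % q, Nat.mod_lt _ hq⟩ ⟨m % p, Nat.mod_lt _ hp⟩

/-- The right CMV moment matrix 𝓜_c. -/
def cmvMR {q p : ℕ} (hq : 0 < q) (hp : 0 < p)
    (c : ℤ → Matrix (Fin q) (Fin p) ℂ) : ℕ → ℕ → ℂ := fun n m =>
  c (cmvE (m / p) - cmvE (n / q)) ⟨n % q, Nat.mod_lt _ hq⟩ ⟨m % p, Nat.mod_lt _ hp⟩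

/-- Christoffel–Darboux formula. -/
theorem stmt_14 (q p : ℕ) (hq : 1 ≤ q) (hp : 1 ≤ p) (x y : ℂ) (hx : x ≠ 0)
    (T : ℕ → ℕ → ℂ)
    (hT : ∀ i j, (i + 2 * q < j → T i j = 0) ∧ (j + 2 * p < i → T i j = 0))
    (β α : ℕ → ℕ → ℂ)
    (hβ : ∀ i b : ℕ, b < q → (∑' j, T i j * β j b) = y * β i b)
    (hα : ∀ j a : ℕ, a < p → (∑' i, α i a * T i j) = x⁻¹ * α j a) :
    ∀ n : ℕ, 1 ≤ n → ∀ a b : ℕ, a < p → b < q →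
      (x⁻¹ - y) * (∑ k ∈ Finset.range n, α k a * β k b) =
        (∑ i ∈ Finset.Ico n (n + 2 * p), ∑ j ∈ Finset.range n, α i a * T i j * β j b)
          - (∑ i ∈ Finset.range n, ∑ j ∈ Finset.Ico n (n + 2 * q), α i a * T i j * β j b) := by
  intro n hn a b ha hb
  set N := n + 2 * p + 2 * q with hNdef
  have hα' : ∀ k, k < n → (∑ i ∈ Finset.range N, α i a * T i k) = x⁻¹ * α k a := by
    intro k hk
    rw [← hα k a ha]
    refine (tsum_eq_sum fun i hi => ?_).symm
    rw [Finset.mem_range, not_lt] at hi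
    rw [(hT i k).2 (by omega), mul_zero]
  have hβ' : ∀ k, k < n → (∑ j ∈ Finset.range N, T k j * β j b) = y * β k b := by
    intro k hk
    rw [← hβ k b hb]
    refine (tsum_eq_sum fun j hj => ?_).symm
    rw [Finset.mem_range, not_lt] at hj
    rw [(hT k j).1 (by omega), zero_mul]
  have key : (x⁻¹ - y) * ∑ k ∈ Finset.range n, α k a * β k b
      = (∑ k ∈ Finset.range n, ∑ i ∈ Finset.range N, α i a * T i k * β k b)
        - (∑ k ∈ Finset.range n, ∑ j ∈ Finset.range N, α k a * T k j * β j b) := by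
    rw [Finset.mul_sum, ← Finset.sum_sub_distrib]
    refine Finset.sum_congr rfl fun k hk => ?_
    rw [Finset.mem_range] at hk
    have h1 := hα' k hk
    have h2 := hβ' k hk
    have e1 : (∑ i ∈ Finset.range N, α i a * T i k * β k b)
        = (∑ i ∈ Finset.range N, α i a * T i k) * β k b := by
      rw [Finset.sum_mul]
    have e2 : (∑ j ∈ Finset.range N, α k a * (T k j * β j b))
        = α k a * (∑ j ∈ Finset.range N, T k j * β j b) := by
      rw [Finset.mul_sum]
    rw [e1, h1]
    have e3 : (∑ j ∈ Finset.range N, α k a * T k j * β j b)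
        = α k a * (y * β k b) := by
      rw [← h2, Finset.mul_sum]
      exact Finset.sum_congr rfl fun j _ => by ring
    rw [e3]; ring
  rw [key]
  -- swap first double sum
  rw [Finset.sum_comm]
  have hnN : n ≤ N := by omega
  have split1 : (∑ i ∈ Finset.range N, ∑ k ∈ Finset.range n, α i a * T i k * β k b)
      = (∑ i ∈ Finset.range n, ∑ k ∈ Finset.range n, α i a * T i k * β k b)
        + ∑ i ∈ Finset.Ico n N, ∑ k ∈ Finset.range n, α i a * T i k * β k b := by
    rw [Finset.range_eq_Ico, ← Finset.sum_Ico_consecutive _ (Nat.zero_le n) hnN, Finset.range_eq_Ico]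
  have split2 : ∀ i, (∑ j ∈ Finset.range N, α i a * T i j * β j b)
      = (∑ j ∈ Finset.range n, α i a * T i j * β j b)
        + ∑ j ∈ Finset.Ico n N, α i a * T i j * β j b := by
    intro i
    rw [Finset.range_eq_Ico, ← Finset.sum_Ico_consecutive _ (Nat.zero_le n) hnN, Finset.range_eq_Ico]
  have shrink1 : (∑ i ∈ Finset.Ico n N, ∑ k ∈ Finset.range n, α i a * T i k * β k b)
      = ∑ i ∈ Finset.Ico n (n + 2 * p), ∑ k ∈ Finset.range n, α i a * T i k * β k b := by
    rw [← Finset.sum_Ico_consecutive _ (by omega : n ≤ n + 2 * p) (by omega : n + 2 * p ≤ N)]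
    have : (∑ i ∈ Finset.Ico (n + 2 * p) N, ∑ k ∈ Finset.range n, α i a * T i k * β k b)
        = 0 := by
      refine Finset.sum_eq_zero fun i hi => Finset.sum_eq_zero fun k hk => ?_
      rw [Finset.mem_Ico] at hi; rw [Finset.mem_range] at hk
      rw [(hT i k).2 (by omega), mul_zero, zero_mul]
    rw [this, add_zero]
  have shrink2 : (∑ i ∈ Finset.range n, ∑ j ∈ Finset.Ico n N, α i a * T i j * β j b)
      = ∑ i ∈ Finset.range n, ∑ j ∈ Finset.Ico n (n + 2 * q), α i a * T i j * β j b := by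
    refine Finset.sum_congr rfl fun i hi => ?_
    rw [Finset.mem_range] at hi
    rw [← Finset.sum_Ico_consecutive _ (by omega : n ≤ n + 2 * q) (by omega : n + 2 * q ≤ N)]
    have : (∑ j ∈ Finset.Ico (n + 2 * q) N, α i a * T i j * β j b) = 0 := by
      refine Finset.sum_eq_zero fun j hj => ?_
      rw [Finset.mem_Ico] at hj
      rw [(hT i j).1 (by omega), mul_zero, zero_mul]
    rw [this, add_zero]
  rw [split1, shrink1, Finset.sum_congr rfl fun i _ => split2 i, Finset.sum_add_distrib,
    shrink2]
  ring
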